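/- A nonzero rational function f ∈ ℂ(c) is expressible as a ratio of two polynomials with positive coefficients if and only if f has no pole at any positive real number and f(x) > 0 for every real x > 0. -/

import Mathlib

/-- A polynomial over ℂ all of whose (nonzero) coefficients are positive real
numbers. -/
def PosCoeffPoly (p : Polynomial ℂ) : Prop :=
  p ≠ 0 ∧ ∀ k ∈ p.support, ∃ r : ℝ, 0 < r ∧ p.coeff k = (r : ℂ)

/-- A rational function is positive if it is a ratio of polynomials with
positive coefficients. -/
def IsPositiveRatFunc (f : RatFunc ℂ) : Prop :=
  ∃ p q : Polynomial ℂ, PosCoeffPoly p ∧ PosCoeffPoly q ∧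
    f = algebraMap (Polynomial ℂ) (RatFunc ℂ) p / algebraMap (Polynomial ℂ) (RatFunc ℂ) q

open Polynomial


def NNP (p : Polynomial ℝ) : Prop := ∀ k, 0 ≤ p.coeff k

lemma NNP.mul {p q : ℝ[X]} (hp : NNP p) (hq : NNP q) : NNP (p*q) := by
  intro k
  rw [Polynomial.coeff_mul]
  exact Finset.sum_nonneg fun x _ => mul_nonneg (hp x.1) (hq x.2)

lemma NNP.eval_pos {p : ℝ[X]} (hp : NNP p) (h0 : p ≠ 0) {x : ℝ} (hx : 0 < x) :
    0 < p.eval x := by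
  rw [Polynomial.eval_eq_sum, Polynomial.sum_def]
  obtain ⟨k, hk⟩ := Polynomial.support_nonempty.mpr h0
  refine Finset.sum_pos' (fun i _ => mul_nonneg (hp i) (pow_nonneg hx.le i)) ⟨k, hk, ?_⟩
  exact mul_pos (lt_of_le_of_ne (hp k) (Ne.symm (Polynomial.mem_support_iff.mp hk))) (pow_pos hx k)


lemma keyIneq (b c : ℝ) (hc : 0 < c) (hb4 : b^2 < 4*c) :
    ∃ N : ℕ, 0 ≤ c * N + b ∧ 0 ≤ b + N ∧
      ∀ P Q : ℝ, 2 ≤ P → 2 ≤ Q → P + Q = (N:ℝ) + 2 →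
        0 ≤ c*((Q-1)*Q) + (P-1)*P + b*(P*Q) := by
  by_cases hb : 0 ≤ b
  · refine ⟨1, by push_cast; nlinarith, by push_cast; nlinarith, ?_⟩
    intro P Q hP hQ _
    have h1 : 0 ≤ c*((Q-1)*Q) := mul_nonneg hc.le (mul_nonneg (by linarith) (by linarith))
    have h2 : 0 ≤ (P-1)*P := mul_nonneg (by linarith) (by linarith)
    have h3 : 0 ≤ b*(P*Q) := mul_nonneg hb (mul_nonneg (by linarith) (by linarith))
    linarith
  · push_neg at hb
    set s := Real.sqrt c with hsdef
    have hs : s^2 = c := Real.sq_sqrt hc.le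
    have hs0 : 0 < s := Real.sqrt_pos.mpr hc
    have hb2s : -(2*s) < b := by nlinarith
    set δ := 2*s + b with hδdef
    have hδ : 0 < δ := by simp only [hδdef]; linarith
    set K := 2*(c+1)/δ + 2 with hKdef
    have hK0 : 0 < K := by positivity
    have hδK : δ*K = 2*(c+1) + 2*δ := by
      rw [hKdef, mul_add, mul_div_assoc', mul_comm δ, mul_div_assoc, div_self hδ.ne', mul_one]; ring
    set M0 := K + 2*s*K/c + 2*s*K + 2*s/c + 2*s + 1 with hM0def
    have hN : M0 ≤ (⌈M0⌉₊ : ℝ) := Nat.le_ceil M0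
    have hsc : c * (2*s/c) = 2*s := by field_simp
    have hsK : 0 ≤ 2*s*K/c := by positivity
    have hsK2 : 0 ≤ 2*s*K := by positivity
    have hsc0 : 0 ≤ 2*s/c := by positivity
    clear_value s δ K M0
    refine ⟨⌈M0⌉₊, ?_, ?_, ?_⟩
    · -- 0 ≤ c*N + b : from N ≥ 2s/c
      have h1 : 2*s/c ≤ (⌈M0⌉₊ : ℝ) := by linarith
      have h2 := mul_le_mul_of_nonneg_left h1 hc.le
      rw [hsc] at h2
      linarith
    · have h1 : 2*s ≤ (⌈M0⌉₊ : ℝ) := by linarith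
      linarith
    · intro P Q hP hQ hPQ
      have hP0 : (0:ℝ) ≤ P := by linarith
      have hQ0 : (0:ℝ) ≤ Q := by linarith
      by_cases hPK : P < K
      · -- Q large; c*(Q-1) ≥ 2sK ≥ (-b)K > (-b)P
        have hQ1 : 2*s*K/c ≤ Q - 1 := by linarith
        have h2 : c*(2*s*K/c) ≤ c*(Q-1) := mul_le_mul_of_nonneg_left hQ1 hc.le
        have h3 : c*(2*s*K/c) = 2*s*K := by field_simp
        have h4a : 2*s*P ≤ 2*s*K := mul_le_mul_of_nonneg_left hPK.le (by linarith)
        have h4b : 0 ≤ δ*P := mul_nonneg hδ.le hP0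
        have h5 : 0 ≤ c*(Q-1) + b*P := by
          have : δ*P = 2*s*P + b*P := by rw [hδdef]; ring
          linarith
        nlinarith [mul_nonneg h5 hQ0, mul_nonneg (by linarith : (0:ℝ) ≤ P-1) hP0]
      · push_neg at hPK
        by_cases hQK : Q < K
        · have hP1 : 2*s*K ≤ P - 1 := by linarith
          have h4a : 2*s*Q ≤ 2*s*K := mul_le_mul_of_nonneg_left hQK.le (by linarith)
          have h4b : 0 ≤ δ*Q := mul_nonneg hδ.le hQ0
          have h5 : 0 ≤ (P-1) + b*Q := by
            have : δ*Q = 2*s*Q + b*Q := by rw [hδdef]; ring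
            linarith
          nlinarith [mul_nonneg h5 hP0,
            mul_nonneg (mul_nonneg hc.le (by linarith : (0:ℝ) ≤ Q-1)) hQ0]
        · push_neg at hQK
          have hm1 : δ*(K*Q) ≤ δ*(P*Q) :=
            mul_le_mul_of_nonneg_left (mul_le_mul_of_nonneg_right hPK hQ0) hδ.le
          have hm2 : δ*(K*P) ≤ δ*(Q*P) :=
            mul_le_mul_of_nonneg_left (mul_le_mul_of_nonneg_right hQK hP0) hδ.le
          have hδKQ : δ*(K*Q) = (2*(c+1) + 2*δ)*Q := by rw [← hδK]; ring
          have hδKP : δ*(K*P) = (2*(c+1) + 2*δ)*P := by rw [← hδK]; ring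
          have e1 : 2*s*(P*Q) ≤ c*Q^2 + P^2 := by nlinarith [sq_nonneg (s*Q - P)]
          have hbT : b*(P*Q) = δ*(P*Q) - 2*s*(P*Q) := by rw [hδdef]; ring
          linarith [mul_nonneg hδ.le hQ0, mul_nonneg hδ.le hP0,
            mul_nonneg hc.le hP0, hm1, hm2, hδKQ, hδKP, e1, hbT]

lemma lemQ (b c : ℝ) (hc : 0 < c) (hb4 : b^2 < 4*c) :
    ∃ N : ℕ, NNP ((X+1)^N * (X^2 + C b * X + C c)) := by
  obtain ⟨N, h1, h2, h3⟩ := keyIneq b c hc hb4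
  refine ⟨N, fun k => ?_⟩
  have hsplit : ((X+1)^N * (X^2 + C b * X + C c) : ℝ[X])
      = (X+1)^N * X^2 + C b * ((X+1)^N * X^1) + C c * (X+1)^N := by ring
  rw [hsplit, coeff_add, coeff_add, coeff_C_mul, coeff_C_mul,
    coeff_mul_X_pow', coeff_mul_X_pow']
  simp only [coeff_X_add_one_pow]
  match k with
  | 0 =>
    norm_num
    exact hc.le
  | 1 =>
    norm_num
    linarith
  | (j+2) =>
    have e2 : j + 2 - 2 = j := by omega
    have e1 : j + 2 - 1 = j + 1 := by omega
    rw [if_pos (by omega), if_pos (by omega), e2, e1]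
    by_cases hjN : j + 2 ≤ N
    · have hj1N : j + 1 ≤ N := by omega
      have idA : (N.choose (j+2) : ℝ) * ((j:ℝ)+2) = (N.choose (j+1) : ℝ) * ((N:ℝ) - ((j:ℝ)+1)) := by
        have h := Nat.choose_succ_right_eq N (j+1)
        have h2 : ((N.choose (j+2) * (j+2) : ℕ) : ℝ) = ((N.choose (j+1) * (N - (j+1)) : ℕ) : ℝ) := by
          exact_mod_cast congrArg (Nat.cast : ℕ → ℝ) h
        push_cast [Nat.cast_sub hj1N] at h2
        linarith [h2]
      have idB : (N.choose (j+1) : ℝ) * ((j:ℝ)+1) = (N.choose j : ℝ) * ((N:ℝ) - (j:ℝ)) := by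
        have h := Nat.choose_succ_right_eq N j
        have h2 : ((N.choose (j+1) * (j+1) : ℕ) : ℝ) = ((N.choose j * (N - j) : ℕ) : ℝ) := by
          exact_mod_cast congrArg (Nat.cast : ℕ → ℝ) h
        push_cast [Nat.cast_sub (by omega : j ≤ N)] at h2
        linarith [h2]
      have hM : (0:ℝ) < N.choose (j+1) := by exact_mod_cast Nat.choose_pos hj1N
      have hP : (2:ℝ) ≤ (j:ℝ)+2 := by
        have := Nat.cast_nonneg (α := ℝ) j; linarith
      have hQ : (2:ℝ) ≤ (N:ℝ) - (j:ℝ) := by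
        have : (j:ℝ) + 2 ≤ (N:ℝ) := by exact_mod_cast hjN
        linarith
      have hPQ : ((j:ℝ)+2) + ((N:ℝ) - (j:ℝ)) = (N:ℝ) + 2 := by ring
      have scalar := h3 ((j:ℝ)+2) ((N:ℝ) - (j:ℝ)) hP hQ hPQ
      have hpq : (0:ℝ) < ((j:ℝ)+2) * ((N:ℝ) - (j:ℝ)) := by nlinarith
      have heq : ((N.choose j : ℝ) + b * (N.choose (j+1)) + c * (N.choose (j+2)))
            * (((j:ℝ)+2) * ((N:ℝ) - (j:ℝ)))
          = (N.choose (j+1) : ℝ) *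
            (c*((((N:ℝ) - (j:ℝ))-1)*((N:ℝ) - (j:ℝ))) + (((j:ℝ)+2)-1)*((j:ℝ)+2)
              + b*(((j:ℝ)+2)*((N:ℝ) - (j:ℝ)))) := by
        linear_combination (c*((N:ℝ) - (j:ℝ)))*idA - ((j:ℝ)+2)*idB
      have hnn : 0 ≤ ((N.choose j : ℝ) + b * (N.choose (j+1)) + c * (N.choose (j+2)))
            * (((j:ℝ)+2) * ((N:ℝ) - (j:ℝ))) := by
        rw [heq]; exact mul_nonneg hM.le scalar
      nlinarith [hnn, hpq]
    · push_neg at hjN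
      by_cases hN1 : N = j+1
      · subst hN1
        rw [show (j+1).choose (j+2) = 0 from Nat.choose_eq_zero_of_lt (by omega),
          Nat.choose_self, show (j+1).choose j = j+1 from Nat.choose_succ_self_right j]
        push_cast
        push_cast at h2
        linarith
      · have hNj : N ≤ j := by omega
        rw [show N.choose (j+2) = 0 from Nat.choose_eq_zero_of_lt (by omega),
          show N.choose (j+1) = 0 from Nat.choose_eq_zero_of_lt (by omega)]
        push_cast
        have := Nat.cast_nonneg (α := ℝ) (N.choose j)
        linarith

lemma lemP : ∀ (n : ℕ) (p : ℝ[X]), p.natDegree ≤ n → p ≠ 0 →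
    (∀ x : ℝ, 0 < x → 0 < p.eval x) →
    ∃ a b : ℝ[X], a ≠ 0 ∧ b ≠ 0 ∧ NNP a ∧ NNP b ∧ p * b = a := by
  intro n
  induction n with
  | zero =>
    intro p hdeg h0 hpos
    refine ⟨p, 1, h0, one_ne_zero, ?_, ?_, mul_one p⟩
    · intro k
      have hp : p = C (p.coeff 0) := p.eq_C_of_natDegree_eq_zero (Nat.le_zero.mp hdeg)
      have hc0 : 0 < p.coeff 0 := by
        have := hpos 1 one_pos
        rw [hp] at this; simpa using this
      rw [hp, coeff_C]
      split <;> [exact hc0.le; rfl]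
    · intro k
      rw [Polynomial.coeff_one]
      split <;> norm_num
  | succ n ih =>
    intro p hdeg h0 hpos
    by_cases hd : p.natDegree ≤ n
    · exact ih p hd h0 hpos
    have hdeg' : p.natDegree = n+1 := by omega
    have hdpos : p.degree ≠ 0 := by
      rw [p.degree_eq_natDegree h0, hdeg']; exact_mod_cast Nat.succ_ne_zero n
    obtain ⟨z, hz⟩ : ∃ z : ℂ, aeval z p = 0 :=
      IsAlgClosed.exists_aeval_eq_zero ℂ p hdpos
    by_cases him : z.im = 0
    · -- real root x₀ = z.re ≤ 0
      set x₀ := z.re with hx₀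
      have hzx : z = (x₀ : ℂ) := Complex.ext rfl (by simp [him])
      have hroot : p.eval x₀ = 0 := by
        rw [hzx] at hz
        have : aeval (algebraMap ℝ ℂ x₀) p = algebraMap ℝ ℂ (aeval x₀ p) :=
          aeval_algebraMap_apply ℂ x₀ p
        rw [show ((x₀:ℂ)) = algebraMap ℝ ℂ x₀ from rfl, this] at hz
        have := (map_eq_zero_iff (algebraMap ℝ ℂ) Complex.ofReal_injective).mp hz
        simpa using this
      have hx0 : x₀ ≤ 0 := by
        by_contra hpos'
        push_neg at hpos'
        exact absurd hroot (ne_of_gt (hpos x₀ hpos'))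
      obtain ⟨p₁, hp₁⟩ := dvd_iff_isRoot.mpr hroot
      have hp₁0 : p₁ ≠ 0 := by rintro rfl; rw [mul_zero] at hp₁; exact h0 hp₁
      have hdeg₁ : p₁.natDegree ≤ n := by
        have := natDegree_mul (X_sub_C_ne_zero x₀) hp₁0
        rw [← hp₁, natDegree_X_sub_C] at this
        omega
      have hpos₁ : ∀ x : ℝ, 0 < x → 0 < p₁.eval x := by
        intro x hx
        have h := hpos x hx
        rw [hp₁, eval_mul, eval_sub, eval_X, eval_C] at h
        nlinarith
      obtain ⟨a₁, b₁, ha₁0, hb₁0, ha₁, hb₁, heq₁⟩ := ih p₁ hdeg₁ hp₁0 hpos₁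
      refine ⟨(X - C x₀) * a₁, b₁, mul_ne_zero (X_sub_C_ne_zero x₀) ha₁0, hb₁0,
        NNP.mul ?_ ha₁, hb₁, ?_⟩
      · intro k
        rw [coeff_sub, coeff_X, coeff_C]
        match k with
        | 0 => norm_num; linarith
        | 1 => norm_num
        | (j+2) => norm_num
      · rw [hp₁, mul_assoc, heq₁]
    · -- complex root, quadratic factor
      set b := -(2*z.re) with hbdef
      set c := ‖z‖^2 with hcdef
      have him2 : 0 < z.im * z.im := mul_self_pos.mpr him
      have hcval : c = z.re^2 + z.im^2 := by
        rw [hcdef, ← Complex.normSq_eq_norm_sq, Complex.normSq_apply]; ring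
      have hc : 0 < c := by rw [hcval]; nlinarith
      have hb4 : b^2 < 4*c := by rw [hbdef, hcval]; nlinarith
      have hquad : (X^2 + C b * X + C c : ℝ[X]) = X ^ 2 - C (2 * z.re) * X + C (‖z‖ ^ 2) := by
        rw [hbdef, hcdef, map_neg]; ring
      obtain ⟨p₁, hp₁⟩ : (X^2 + C b * X + C c : ℝ[X]) ∣ p := by
        rw [hquad]; exact p.quadratic_dvd_of_aeval_eq_zero_im_ne_zero hz him
      have hq0 : (X^2 + C b * X + C c : ℝ[X]) ≠ 0 := by
        intro h
        have := congrArg (fun q => Polynomial.coeff q 2) h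
        simp [coeff_C] at this
      have hqdeg : (X^2 + C b * X + C c : ℝ[X]).natDegree = 2 := by
        have : (X^2 + C b * X + C c : ℝ[X]) = C 1 * X^2 + C b * X + C c := by
          rw [map_one, one_mul]
        rw [this]
        exact natDegree_quadratic one_ne_zero
      have hp₁0 : p₁ ≠ 0 := by rintro rfl; rw [mul_zero] at hp₁; exact h0 hp₁
      have hdeg₁ : p₁.natDegree ≤ n := by
        have := natDegree_mul hq0 hp₁0
        rw [← hp₁, hqdeg] at this
        omega
      have hqpos : ∀ x : ℝ, 0 < (X^2 + C b * X + C c : ℝ[X]).eval x := by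
        intro x
        have : (X^2 + C b * X + C c : ℝ[X]).eval x = x^2 + b*x + c := by
          simp [eval_add, eval_mul, eval_pow]
        rw [this]
        nlinarith [sq_nonneg (2*x + b), hb4]
      have hpos₁ : ∀ x : ℝ, 0 < x → 0 < p₁.eval x := by
        intro x hx
        have h := hpos x hx
        rw [hp₁, eval_mul] at h
        have := hqpos x
        nlinarith
      obtain ⟨a₁, b₁, ha₁0, hb₁0, ha₁, hb₁, heq₁⟩ := ih p₁ hdeg₁ hp₁0 hpos₁
      obtain ⟨N, hN⟩ := lemQ b c hc hb4
      have hX1 : ((X:ℝ[X])+1) ≠ 0 := fun h => by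
        simpa [coeff_one] using congrArg (fun q => Polynomial.coeff q 1) h
      have hXN : ((X:ℝ[X])+1)^N ≠ 0 := pow_ne_zero N hX1
      have hNN_XN : NNP (((X:ℝ[X])+1)^N) := by
        intro k; rw [coeff_X_add_one_pow]; positivity
      refine ⟨((X+1)^N * (X^2 + C b * X + C c)) * a₁, (X+1)^N * b₁,
        mul_ne_zero (mul_ne_zero hXN hq0) ha₁0, mul_ne_zero hXN hb₁0,
        NNP.mul hN ha₁, NNP.mul hNN_XN hb₁, ?_⟩
      calc p * ((X+1)^N * b₁) = ((X+1)^N * (X^2 + C b * X + C c)) * (p₁ * b₁) := by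
            rw [hp₁]; ring
        _ = ((X+1)^N * (X^2 + C b * X + C c)) * a₁ := by rw [heq₁]

lemma evalmap (p : ℝ[X]) (x : ℝ) :
    (p.map Complex.ofRealHom).eval (x:ℂ) = ((p.eval x : ℝ) : ℂ) := by
  rw [eval_map]
  exact Polynomial.eval₂_at_apply Complex.ofRealHom x

lemma evalConj (p : ℂ[X]) (w : ℂ) :
    (p.map (starRingEnd ℂ)).eval w = (starRingEnd ℂ) (p.eval ((starRingEnd ℂ) w)) := by
  rw [eval_map]
  have h := Polynomial.eval₂_at_apply (p := p) (starRingEnd ℂ) ((starRingEnd ℂ) w)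
  rwa [Complex.conj_conj] at h

lemma realify {P : ℂ[X]} (hP : PosCoeffPoly P) :
    ∃ p : ℝ[X], p ≠ 0 ∧ NNP p ∧ p.map Complex.ofRealHom = P := by
  obtain ⟨hP0, hPc⟩ := hP
  have hmem : ∀ n, P.coeff n ∈ Set.range Complex.ofRealHom := by
    intro n
    by_cases hn : n ∈ P.support
    · obtain ⟨r, _, hr⟩ := hPc n hn
      exact ⟨r, by simpa using hr.symm⟩
    · exact ⟨0, by simp [Polynomial.notMem_support_iff.mp hn]⟩
  obtain ⟨p, hp⟩ := (Polynomial.mem_lifts P).mp ((Polynomial.lifts_iff_coeff_lifts P).mpr hmem)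
  refine ⟨p, ?_, ?_, hp⟩
  · rintro rfl; rw [Polynomial.map_zero] at hp; exact hP0 hp.symm
  · intro k
    have hk : (p.coeff k : ℂ) = P.coeff k := by
      rw [← hp, Polynomial.coeff_map]; simp
    by_cases hkk : k ∈ P.support
    · obtain ⟨r, hr0, hr⟩ := hPc k hkk
      have : p.coeff k = r := by
        apply Complex.ofReal_injective; rw [hk, hr]
      rw [this]; exact hr0.le
    · have : (p.coeff k : ℂ) = 0 := by rw [hk, Polynomial.notMem_support_iff.mp hkk]
      have := Complex.ofReal_injective (by simpa using this : ((p.coeff k : ℝ):ℂ) = ((0:ℝ):ℂ))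
      rw [this]
  
lemma complexify {p : ℝ[X]} (h0 : p ≠ 0) (hp : NNP p) :
    PosCoeffPoly (p.map Complex.ofRealHom) := by
  constructor
  · exact Polynomial.map_ne_zero h0
  · intro k hk
    have hc : (p.map Complex.ofRealHom).coeff k = ((p.coeff k : ℝ) : ℂ) := by
      rw [Polynomial.coeff_map]; simp
    refine ⟨p.coeff k, ?_, hc⟩
    rcases lt_or_eq_of_le (hp k) with h | h
    · exact h
    · exfalso
      apply Polynomial.mem_support_iff.mp hk
      rw [hc, ← h]; simp

lemma ratfunc_eq_div_iff (f : RatFunc ℂ) (p q : ℂ[X]) (hq : q ≠ 0) :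
    f = algebraMap (Polynomial ℂ) (RatFunc ℂ) p / algebraMap (Polynomial ℂ) (RatFunc ℂ) q
      ↔ f.num * q = f.denom * p := by
  have hd := RatFunc.algebraMap_ne_zero (f.denom_ne_zero)
  have hq' := RatFunc.algebraMap_ne_zero hq
  conv_lhs => rw [← f.num_div_denom]
  rw [div_eq_div_iff hd hq', ← map_mul, ← map_mul]
  rw [(RatFunc.algebraMap_injective ℂ).eq_iff, mul_comm p f.denom]

lemma liftOfSelfConj {h : ℂ[X]} (hc : h.map (starRingEnd ℂ) = h) :
    ∃ p : ℝ[X], p.map Complex.ofRealHom = h := by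
  apply (Polynomial.mem_lifts _).mp
  apply (Polynomial.lifts_iff_coeff_lifts _).mpr
  intro n
  have h1 := congrArg (fun p => Polynomial.coeff p n) hc
  simp only [Polynomial.coeff_map] at h1
  obtain ⟨r, hr⟩ := Complex.conj_eq_iff_real.mp h1
  exact ⟨r, by simpa using hr.symm⟩

/-- A nonzero rational function is positive iff it has no pole at any positive
real number and takes positive real values on the positive reals. -/
theorem stmt2 (f : RatFunc ℂ) (hf : f ≠ 0) :
    IsPositiveRatFunc f ↔
      ((∀ x : ℝ, 0 < x → Polynomial.eval (x : ℂ) f.denom ≠ 0) ∧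
       (∀ x : ℝ, 0 < x → ∃ r : ℝ, 0 < r ∧
          Polynomial.eval (x : ℂ) f.num / Polynomial.eval (x : ℂ) f.denom = (r : ℂ))) := by
  constructor
  · rintro ⟨P, Q, hP, hQ, heq⟩
    obtain ⟨pr, hpr0, hprN, hprm⟩ := realify hP
    obtain ⟨qr, hqr0, hqrN, hqrm⟩ := realify hQ
    have hcross : f.num * Q = f.denom * P := (ratfunc_eq_div_iff f P Q hQ.1).mp heq
    have hdvd : f.denom ∣ Q := by
      have h1 : IsCoprime f.denom f.num := (RatFunc.isCoprime_num_denom f).symm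
      exact h1.dvd_of_dvd_mul_left ⟨P, hcross⟩
    have hden : ∀ x : ℝ, 0 < x → Polynomial.eval (x : ℂ) f.denom ≠ 0 := by
      intro x hx hden0
      obtain ⟨R, hR⟩ := hdvd
      have hz : Q.eval (x:ℂ) = 0 := by rw [hR, eval_mul, hden0, zero_mul]
      have hQe : Q.eval (x:ℂ) = ((qr.eval x : ℝ):ℂ) := by rw [← hqrm, evalmap]
      rw [hQe] at hz
      exact absurd (Complex.ofReal_injective (by simpa using hz))
        (ne_of_gt (hqrN.eval_pos hqr0 hx))
    refine ⟨hden, ?_⟩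
    intro x hx
    have hqpos := hqrN.eval_pos hqr0 hx
    have hQe : Q.eval (x:ℂ) = ((qr.eval x : ℝ):ℂ) := by rw [← hqrm, evalmap]
    have hPe : P.eval (x:ℂ) = ((pr.eval x : ℝ):ℂ) := by rw [← hprm, evalmap]
    have hQne : Q.eval (x:ℂ) ≠ 0 := by
      rw [hQe]; exact_mod_cast ne_of_gt hqpos
    have hdne := hden x hx
    have hev : f.num.eval (x:ℂ) * Q.eval (x:ℂ) = f.denom.eval (x:ℂ) * P.eval (x:ℂ) := by
      rw [← eval_mul, ← eval_mul, hcross]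
    refine ⟨pr.eval x / qr.eval x, div_pos (hprN.eval_pos hpr0 hx) hqpos, ?_⟩
    rw [Complex.ofReal_div, ← hPe, ← hQe, div_eq_div_iff hdne hQne]
    linear_combination hev
  · rintro ⟨hden, hval⟩
    have hnum0 : f.num ≠ 0 := RatFunc.num_ne_zero hf
    set dc := f.denom.map (starRingEnd ℂ) with hdc
    have hdc0 : dc ≠ 0 := Polynomial.map_ne_zero f.denom_ne_zero
    have hdce : ∀ x : ℝ, dc.eval (x:ℂ) = (starRingEnd ℂ) (f.denom.eval (x:ℂ)) := by
      intro x; rw [hdc, evalConj, Complex.conj_ofReal]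
    have hkey : ∀ x : ℝ, 0 < x → ∃ t : ℝ, 0 < t ∧ (f.num * dc).eval (x:ℂ) = (t:ℂ) := by
      intro x hx
      obtain ⟨r, hr0, hr⟩ := hval x hx
      have hd := hden x hx
      rw [div_eq_iff hd] at hr
      refine ⟨r * Complex.normSq (f.denom.eval (x:ℂ)),
        mul_pos hr0 (Complex.normSq_pos.mpr hd), ?_⟩
      rw [eval_mul, hr, hdce, Complex.ofReal_mul, mul_assoc, Complex.mul_conj]
    have hDkey : ∀ x : ℝ, 0 < x →
        (f.denom * dc).eval (x:ℂ) = ((Complex.normSq (f.denom.eval (x:ℂ)) : ℝ) : ℂ) := by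
      intro x _
      rw [eval_mul, hdce, Complex.mul_conj]
    have hconj : (f.num * dc).map (starRingEnd ℂ) = f.num * dc := by
      apply Polynomial.eq_of_infinite_eval_eq
      apply Set.Infinite.mono (s := (Complex.ofReal '' Set.Ioi 0)) ?_
      · exact (Set.Ioi_infinite 0).image Complex.ofReal_injective.injOn
      · rintro _ ⟨x, hx, rfl⟩
        obtain ⟨t, _, hte⟩ := hkey x hx
        show ((f.num * dc).map (starRingEnd ℂ)).eval _ = (f.num * dc).eval _
        rw [evalConj, Complex.conj_ofReal, hte, Complex.conj_ofReal]
    have hDconj : (f.denom * dc).map (starRingEnd ℂ) = f.denom * dc := by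
      have hcc : (starRingEnd ℂ).comp (starRingEnd ℂ) = RingHom.id ℂ :=
        RingHom.ext fun z => Complex.conj_conj z
      have h2 : dc.map (starRingEnd ℂ) = f.denom := by
        rw [hdc, Polynomial.map_map, hcc, Polynomial.map_id]
      rw [Polynomial.map_mul, h2, ← hdc]
      exact mul_comm _ _
    obtain ⟨hrp, hhrp⟩ := liftOfSelfConj hconj
    obtain ⟨Drp, hDrp⟩ := liftOfSelfConj hDconj
    have hh0 : f.num * dc ≠ 0 := mul_ne_zero hnum0 hdc0
    have hD0 : f.denom * dc ≠ 0 := mul_ne_zero f.denom_ne_zero hdc0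
    have hhrp0 : hrp ≠ 0 := by rintro rfl; rw [Polynomial.map_zero] at hhrp; exact hh0 hhrp.symm
    have hDrp0 : Drp ≠ 0 := by rintro rfl; rw [Polynomial.map_zero] at hDrp; exact hD0 hDrp.symm
    have hrpos : ∀ x : ℝ, 0 < x → 0 < hrp.eval x := by
      intro x hx
      obtain ⟨t, ht0, hte⟩ := hkey x hx
      have h1 : ((hrp.eval x : ℝ):ℂ) = (t:ℂ) := by rw [← evalmap, hhrp, hte]
      have h2 := Complex.ofReal_injective h1
      rw [h2]; exact ht0
    have hDpos : ∀ x : ℝ, 0 < x → 0 < Drp.eval x := by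
      intro x hx
      have h1 : ((Drp.eval x : ℝ):ℂ) = ((Complex.normSq (f.denom.eval (x:ℂ)) : ℝ):ℂ) := by
        rw [← evalmap, hDrp, hDkey x hx]
      have h2 := Complex.ofReal_injective h1
      rw [h2]
      exact Complex.normSq_pos.mpr (hden x hx)
    obtain ⟨a₁, b₁, ha₁0, hb₁0, ha₁, hb₁, heq₁⟩ := lemP hrp.natDegree hrp le_rfl hhrp0 hrpos
    obtain ⟨a₂, b₂, ha₂0, hb₂0, ha₂, hb₂, heq₂⟩ := lemP Drp.natDegree Drp le_rfl hDrp0 hDpos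
    refine ⟨(a₁*b₂).map Complex.ofRealHom, (b₁*a₂).map Complex.ofRealHom,
      complexify (mul_ne_zero ha₁0 hb₂0) (NNP.mul ha₁ hb₂),
      complexify (mul_ne_zero hb₁0 ha₂0) (NNP.mul hb₁ ha₂), ?_⟩
    rw [ratfunc_eq_div_iff f _ _ (Polynomial.map_ne_zero (mul_ne_zero hb₁0 ha₂0))]
    have e₁ : a₁.map Complex.ofRealHom = (f.num * dc) * b₁.map Complex.ofRealHom := by
      rw [← heq₁, Polynomial.map_mul, hhrp]
    have e₂ : a₂.map Complex.ofRealHom = (f.denom * dc) * b₂.map Complex.ofRealHom := by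
      rw [← heq₂, Polynomial.map_mul, hDrp]
    rw [Polynomial.map_mul, Polynomial.map_mul, e₁, e₂]
    ring
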